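/- Let V be a 2n-dimensional symplectic vector space with form ω, E ∈ V* a fixed covector, S ⊆ V an m-dimensional subspace, T ⊆ V a (2n−m)-dimensional subspace with S ∩ T = {0} and flat_ω(S) = span{β₁,…,β_m} for given covectors β_a. Then there is a unique vector Γ ∈ T such that flat_ω(Γ) − E ∈ span{β₁,…,β_m}. -/
import Mathlib


theorem symplectic_characterization_unique_closed_loop
    (V : Type*) [AddCommGroup V] [Module ℝ V] [FiniteDimensional ℝ V]
    (n m : ℕ) (hdim : Module.finrank ℝ V = 2 * n)
    (ω : V →ₗ[ℝ] V →ₗ[ℝ] ℝ)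
    (halt : ∀ X : V, ω X X = 0)
    (hnd : ∀ X : V, (∀ Y : V, ω X Y = 0) → X = 0)
    (E : Module.Dual ℝ V)
    (β : Fin m → Module.Dual ℝ V) (hβ : LinearIndependent ℝ β)
    (S T : Submodule ℝ V)
    (hS : Module.finrank ℝ S = m)
    (hT : Module.finrank ℝ T = 2 * n - m)
    (hST : S ⊓ T = ⊥)
    (hflatS : Submodule.map ω S = Submodule.span ℝ (Set.range β)) :
    ∃! Γ : V, Γ ∈ T ∧ (ω Γ - E) ∈ Submodule.span ℝ (Set.range β) := by
  have hinj : Function.Injective ω := by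
    rw [← LinearMap.ker_eq_bot]
    ext X
    simp only [LinearMap.mem_ker, Submodule.mem_bot]
    constructor
    · intro h
      exact hnd X (fun Y => by rw [h]; rfl)
    · rintro rfl; simp
  have hm : m ≤ 2 * n := by
    have := hβ.fintype_card_le_finrank
    simpa [Subspace.dual_finrank_eq, hdim] using this
  -- S ⊔ T = ⊤
  have hsup : S ⊔ T = ⊤ := by
    apply Submodule.eq_top_of_finrank_eq
    have := Submodule.finrank_sup_add_finrank_inf_eq S T
    rw [hST] at this
    simp only [finrank_bot, add_zero] at this
    rw [this, hS, hT, hdim]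
    omega
  have hsurj : Function.Surjective ω :=
    ((LinearMap.injective_iff_surjective_of_finrank_eq_finrank
      (by rw [Subspace.dual_finrank_eq])).mp hinj)
  -- existence
  have hE : E ∈ Submodule.map ω S ⊔ Submodule.map ω T := by
    rw [← Submodule.map_sup, hsup]
    exact ⟨hsurj E |>.choose, trivial, (hsurj E).choose_spec⟩
  rcases Submodule.mem_sup.mp hE with ⟨a, ha, b, hb, hab⟩
  rcases hb with ⟨t, htT, rfl⟩
  refine ⟨t, ⟨htT, ?_⟩, ?_⟩
  · have : ω t - E = -a := by rw [← hab]; abel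
    rw [this, ← hflatS]
    exact neg_mem ha
  · rintro Γ ⟨hΓT, hΓ⟩
    have hdiff : ω (Γ - t) ∈ Submodule.map ω S := by
      rw [hflatS]
      have ht' : ω t - E ∈ Submodule.span ℝ (Set.range β) := by
        have : ω t - E = -a := by rw [← hab]; abel
        rw [this, ← hflatS]
        exact neg_mem ha
      have := sub_mem hΓ ht'
      simpa [map_sub] using this
    rcases hdiff with ⟨s, hsS, hs⟩
    have hst : s = Γ - t := hinj hs
    rw [hst] at hsS
    have hmem : Γ - t ∈ S ⊓ T := ⟨hsS, sub_mem hΓT htT⟩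
    rw [hST, Submodule.mem_bot] at hmem
    exact sub_eq_zero.mp hmem
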